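/- In minimal first-order logic (connectives → and ∀ only), if a formula φ is derivable from an environment Γ then there exists a proof term in long normal form of type φ in Γ. -/

import Mathlib

namespace MFOL

/-- Formulas of minimal first-order logic (→ and ∀ only, no function symbols),
in de Bruijn representation; individual terms are just variables `ℕ`. -/
inductive Form where
  | atom : ℕ → List ℕ → Form
  | imp : Form → Form → Form
  | all : Form → Form
deriving DecidableEq

def upRen (σ : ℕ → ℕ) : ℕ → ℕ
  | 0 => 0
  | n + 1 => σ n + 1

/-- Capture-avoiding (simultaneous) substitution of variables for variables. -/
def substF : (ℕ → ℕ) → Form → Form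
  | σ, .atom p args => .atom p (args.map σ)
  | σ, .imp a b => .imp (substF σ a) (substF σ b)
  | σ, .all a => .all (substF (upRen σ) a)

/-- Substitution of the variable `x` for the outermost bound variable. -/
def subst0 (x : ℕ) : Form → Form :=
  substF (fun n => match n with | 0 => x | n + 1 => n)

def shiftF : Form → Form := substF Nat.succ

/-- Natural deduction for minimal first-order logic. -/
inductive Prv : Set Form → Form → Prop
  | ax {Γ : Set Form} {φ : Form} : φ ∈ Γ → Prv Γ φ
  | impI {Γ : Set Form} {φ ψ : Form} : Prv (insert φ Γ) ψ → Prv Γ (.imp φ ψ)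
  | impE {Γ : Set Form} {φ ψ : Form} : Prv Γ (.imp φ ψ) → Prv Γ φ → Prv Γ ψ
  | allI {Γ : Set Form} {φ : Form} : Prv (shiftF '' Γ) φ → Prv Γ (.all φ)
  | allE {Γ : Set Form} {φ : Form} (x : ℕ) : Prv Γ (.all φ) → Prv Γ (subst0 x φ)

mutual
  /-- The Σ₁ class of the Mints hierarchy: Σ₁ ::= a | Π₁ → Σ₁. -/
  inductive IsSigma1 : Form → Prop
    | atom (p : ℕ) (args : List ℕ) : IsSigma1 (.atom p args)
    | imp {τ σ : Form} : IsPi1 τ → IsSigma1 σ → IsSigma1 (.imp τ σ)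
  /-- The Π₁ class of the Mints hierarchy: Π₁ ::= a | Σ₁ → Π₁ | ∀x.Π₁. -/
  inductive IsPi1 : Form → Prop
    | atom (p : ℕ) (args : List ℕ) : IsPi1 (.atom p args)
    | imp {σ π : Form} : IsSigma1 σ → IsPi1 π → IsPi1 (.imp σ π)
    | all {π : Form} : IsPi1 π → IsPi1 (.all π)
end

def IsAtomF (f : Form) : Prop := ∃ p args, f = Form.atom p args

/-- Premises τ₁,…,τ_q of a Σ₁ formula τ₁ → ⋯ → τ_q → c. -/
def premsOf : Form → List Form
  | .imp a b => a :: premsOf b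
  | .atom p args => []
  | .all a => []

/-- Target atom of a Σ₁ formula. -/
def targetOf : Form → Form
  | .imp _ b => targetOf b
  | f => f

/-- `Unfolds ψ prems b` : instantiating the ∀-blocks of the Π₁ formula
`ψ = ∀ȳ₁(σ₁ → ∀ȳ₂(σ₂ → ⋯ → ∀ȳ_k(σ_k → b')⋯))` at some variables x̄
yields the list of (instantiated) premises `prems = [σ₁[ȳ:=x̄],…]` and
the (instantiated) target atom `b = b'[ȳ:=x̄]`. -/
inductive Unfolds : Form → List Form → Form → Prop
  | atom (p : ℕ) (args : List ℕ) : Unfolds (.atom p args) [] (.atom p args)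
  | imp {σ ψ : Form} {prems : List Form} {b : Form} :
      Unfolds ψ prems b → Unfolds (.imp σ ψ) (σ :: prems) b
  | all {ψ : Form} {prems : List Form} {b : Form} (x : ℕ) :
      Unfolds (subst0 x ψ) prems b → Unfolds (.all ψ) prems b

/-- `closedAt k φ`: all free de Bruijn indices of `φ` are `< k`. -/
def closedAt : ℕ → Form → Prop
  | k, .atom _ args => ∀ x ∈ args, x < k
  | k, .imp a b => closedAt k a ∧ closedAt k b
  | k, .all a => closedAt (k + 1) a

end MFOL

namespace MFOL

/-- Proof terms: proof variables, proof abstraction λX:φ.M, object abstraction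
λx.M, proof application MN, object application Mx. -/
inductive Pt where
  | pvar : ℕ → Pt
  | plam : Form → Pt → Pt
  | olam : Pt → Pt
  | papp : Pt → Pt → Pt
  | oapp : Pt → ℕ → Pt

mutual
  /-- `Lnf Γ N φ`: N is a long normal form of type φ in environment Γ. -/
  inductive Lnf : List Form → Pt → Form → Prop
    | plam {Γ : List Form} {φ ψ : Form} {M : Pt} :
        Lnf (φ :: Γ) M ψ → Lnf Γ (.plam φ M) (.imp φ ψ)
    | olam {Γ : List Form} {φ : Form} {M : Pt} :
        Lnf (Γ.map shiftF) M φ → Lnf Γ (.olam M) (.all φ)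
    | head {Γ : List Form} {M : Pt} {p : ℕ} {args : List ℕ} :
        LnfApp Γ M (.atom p args) → Lnf Γ M (.atom p args)
  /-- Head variable applied to a sequence of lnf proof arguments and object
  variables. -/
  inductive LnfApp : List Form → Pt → Form → Prop
    | var {Γ : List Form} {n : ℕ} {φ : Form} :
        Γ[n]? = some φ → LnfApp Γ (.pvar n) φ
    | papp {Γ : List Form} {M N : Pt} {φ ψ : Form} :
        LnfApp Γ M (.imp φ ψ) → Lnf Γ N φ → LnfApp Γ (.papp M N) ψ
    | oapp {Γ : List Form} {M : Pt} {φ : Form} (x : ℕ) :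
        LnfApp Γ M (.all φ) → LnfApp Γ (.oapp M x) (subst0 x φ)
end

end MFOL

namespace MFOL

theorem substF_congr {σ τ : ℕ → ℕ} (h : ∀ n, σ n = τ n) : ∀ f, substF σ f = substF τ f
  | .atom p args => by simp [substF, List.map_congr_left (fun x _ => h x)]
  | .imp a b => by simp [substF, substF_congr h a, substF_congr h b]
  | .all a => by
    have h' : ∀ n, upRen σ n = upRen τ n := by intro n; cases n <;> simp [upRen, h]
    simp [substF, substF_congr h' a]

theorem substF_comp (σ τ : ℕ → ℕ) : ∀ f, substF σ (substF τ f) = substF (σ ∘ τ) f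
  | .atom p args => by simp [substF, List.map_map]
  | .imp a b => by simp [substF, substF_comp σ τ a, substF_comp σ τ b]
  | .all a => by
    have h : ∀ n, (upRen σ ∘ upRen τ) n = upRen (σ ∘ τ) n := by
      intro n; cases n <;> simp [upRen]
    simp [substF, substF_comp (upRen σ) (upRen τ) a, substF_congr h a]

theorem substF_id : ∀ f, substF id f = f
  | .atom p args => by simp [substF]
  | .imp a b => by simp [substF, substF_id a, substF_id b]
  | .all a => by
    have h : ∀ n, upRen id n = id n := by intro n; cases n <;> simp [upRen]
    simp [substF, substF_congr h a, substF_id a]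

def sizeF : Form → ℕ
  | .atom _ _ => 1
  | .imp a b => sizeF a + sizeF b + 1
  | .all a => sizeF a + 1

theorem sizeF_substF (σ : ℕ → ℕ) : ∀ f, sizeF (substF σ f) = sizeF f
  | .atom p args => by simp [substF, sizeF]
  | .imp a b => by simp [substF, sizeF, sizeF_substF σ a, sizeF_substF σ b]
  | .all a => by simp [substF, sizeF, sizeF_substF (upRen σ) a]

theorem sizeF_subst0 (x : ℕ) (f : Form) : sizeF (subst0 x f) = sizeF f :=
  sizeF_substF _ f

theorem subst0_shiftF (x : ℕ) (f : Form) : subst0 x (shiftF f) = f := by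
  rw [shiftF, subst0, substF_comp]
  exact (substF_congr (fun n => rfl) f).trans (substF_id f)

theorem subst0_substF_up (σ : ℕ → ℕ) (x : ℕ) (f : Form) :
    subst0 (σ x) (substF (upRen σ) f) = substF σ (subst0 x f) := by
  rw [subst0, subst0, substF_comp, substF_comp]
  apply substF_congr
  intro n; cases n <;> simp [upRen]

theorem subst0_up_zero (f : Form) : subst0 0 (substF (upRen Nat.succ) f) = f := by
  rw [subst0, substF_comp]
  refine (substF_congr ?_ f).trans (substF_id f)
  intro n; cases n <;> simp [upRen]

end MFOL
namespace MFOL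

def Pren1 (Γ : List Form) (ψ : Form) : Prop :=
  ∀ (Δ : List Form) (ρ : ℕ → ℕ),
    (∀ k τ, Γ[k]? = some τ → Δ[ρ k]? = some τ) → ∃ M', Lnf Δ M' ψ

def Pren2 (Γ : List Form) (ψ : Form) : Prop :=
  ∀ (Δ : List Form) (ρ : ℕ → ℕ),
    (∀ k τ, Γ[k]? = some τ → Δ[ρ k]? = some τ) → ∃ M', LnfApp Δ M' ψ

theorem pren_both :
    (∀ Γ M ψ, Lnf Γ M ψ → Pren1 Γ ψ) ∧ (∀ Γ M ψ, LnfApp Γ M ψ → Pren2 Γ ψ) := by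
  have c1 : ∀ (Γ : List Form) (φ ψ : Form), Pren1 (φ :: Γ) ψ → Pren1 Γ (.imp φ ψ) := by
    intro Γ φ ψ ih Δ ρ hρ
    obtain ⟨M', hM'⟩ := ih (φ :: Δ) (fun k => match k with | 0 => 0 | k+1 => ρ k + 1)
      (by intro k τ hk; cases k with
          | zero => simpa using hk
          | succ k => simpa using hρ k τ (by simpa using hk))
    exact ⟨.plam φ M', .plam hM'⟩
  have c2 : ∀ (Γ : List Form) (φ : Form), Pren1 (Γ.map shiftF) φ → Pren1 Γ (.all φ) := by
    intro Γ φ ih Δ ρ hρ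
    obtain ⟨M', hM'⟩ := ih (Δ.map shiftF) ρ
      (by intro k τ hk
          rw [List.getElem?_map] at hk ⊢
          cases hΓ : Γ[k]? with
          | none => rw [hΓ] at hk; simp at hk
          | some τ' =>
            rw [hΓ] at hk; simp at hk
            rw [hρ k τ' hΓ]; simp [hk])
    exact ⟨.olam M', .olam hM'⟩
  have c3 : ∀ (Γ : List Form) (p : ℕ) (args : List ℕ),
      Pren2 Γ (.atom p args) → Pren1 Γ (.atom p args) := by
    intro Γ p args ih Δ ρ hρ
    obtain ⟨M', hM'⟩ := ih Δ ρ hρ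
    exact ⟨M', .head hM'⟩
  have c4 : ∀ (Γ : List Form) (n : ℕ) (φ : Form), Γ[n]? = some φ → Pren2 Γ φ := by
    intro Γ n φ hn Δ ρ hρ
    exact ⟨.pvar (ρ n), .var (hρ n _ hn)⟩
  have c5 : ∀ (Γ : List Form) (φ ψ : Form), Pren2 Γ (.imp φ ψ) → Pren1 Γ φ → Pren2 Γ ψ := by
    intro Γ φ ψ ihM ihN Δ ρ hρ
    obtain ⟨M', hM'⟩ := ihM Δ ρ hρ
    obtain ⟨N', hN'⟩ := ihN Δ ρ hρ
    exact ⟨.papp M' N', .papp hM' hN'⟩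
  have c6 : ∀ (Γ : List Form) (φ : Form) (x : ℕ), Pren2 Γ (.all φ) → Pren2 Γ (subst0 x φ) := by
    intro Γ φ x ih Δ ρ hρ
    obtain ⟨M', hM'⟩ := ih Δ ρ hρ
    exact ⟨.oapp M' x, .oapp x hM'⟩
  constructor
  · intro Γ M ψ h
    exact Lnf.rec (motive_1 := fun Γ _ ψ _ => Pren1 Γ ψ) (motive_2 := fun Γ _ ψ _ => Pren2 Γ ψ)
      (fun {Γ φ ψ M} _ ih => c1 Γ φ ψ ih) (fun {Γ φ M} _ ih => c2 Γ φ ih)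
      (fun {Γ M p args} _ ih => c3 Γ p args ih) (fun {Γ n φ} hn => c4 Γ n φ hn)
      (fun {Γ M N φ ψ} _ _ ihM ihN => c5 Γ φ ψ ihM ihN)
      (fun {Γ M φ} x _ ih => c6 Γ φ x ih) h
  · intro Γ M ψ h
    exact LnfApp.rec (motive_1 := fun Γ _ ψ _ => Pren1 Γ ψ) (motive_2 := fun Γ _ ψ _ => Pren2 Γ ψ)
      (fun {Γ φ ψ M} _ ih => c1 Γ φ ψ ih) (fun {Γ φ M} _ ih => c2 Γ φ ih)
      (fun {Γ M p args} _ ih => c3 Γ p args ih) (fun {Γ n φ} hn => c4 Γ n φ hn)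
      (fun {Γ M N φ ψ} _ _ ihM ihN => c5 Γ φ ψ ihM ihN)
      (fun {Γ M φ} x _ ih => c6 Γ φ x ih) h

theorem pren_lnf {Γ M ψ} (h : Lnf Γ M ψ) : Pren1 Γ ψ := pren_both.1 Γ M ψ h
theorem pren_lnfapp {Γ M ψ} (h : LnfApp Γ M ψ) : Pren2 Γ ψ := pren_both.2 Γ M ψ h

/-- Weakening by one hypothesis at the front. -/
theorem weaken_cons {Γ M ψ} (h : Lnf Γ M ψ) (α : Form) : ∃ M', Lnf (α :: Γ) M' ψ :=
  pren_lnf h (α :: Γ) Nat.succ (by intro k τ hk; simpa using hk)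

end MFOL
namespace MFOL

def OS1 (Γ : List Form) (ψ : Form) : Prop :=
  ∀ σ : ℕ → ℕ, ∃ M', Lnf (Γ.map (substF σ)) M' (substF σ ψ)

def OS2 (Γ : List Form) (ψ : Form) : Prop :=
  ∀ σ : ℕ → ℕ, ∃ M', LnfApp (Γ.map (substF σ)) M' (substF σ ψ)

theorem shiftF_substF_comm (σ : ℕ → ℕ) (f : Form) :
    substF (upRen σ) (shiftF f) = shiftF (substF σ f) := by
  simp only [shiftF]
  rw [substF_comp, substF_comp]
  apply substF_congr; intro n; simp [upRen]

theorem osubst_both :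
    (∀ Γ M ψ, Lnf Γ M ψ → OS1 Γ ψ) ∧ (∀ Γ M ψ, LnfApp Γ M ψ → OS2 Γ ψ) := by
  have c1 : ∀ (Γ : List Form) (φ ψ : Form), OS1 (φ :: Γ) ψ → OS1 Γ (.imp φ ψ) := by
    intro Γ φ ψ ih σ
    obtain ⟨M', hM'⟩ := ih σ
    exact ⟨.plam (substF σ φ) M', .plam (by simpa using hM')⟩
  have c2 : ∀ (Γ : List Form) (φ : Form), OS1 (Γ.map shiftF) φ → OS1 Γ (.all φ) := by
    intro Γ φ ih σ
    obtain ⟨M', hM'⟩ := ih (upRen σ)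
    rw [List.map_map] at hM'
    have hc : (Γ.map (substF (upRen σ) ∘ shiftF)) = (Γ.map (substF σ)).map shiftF := by
      rw [List.map_map]
      exact List.map_congr_left (fun f _ => shiftF_substF_comm σ f)
    rw [hc] at hM'
    exact ⟨.olam M', .olam hM'⟩
  have c3 : ∀ (Γ : List Form) (p : ℕ) (args : List ℕ),
      OS2 Γ (.atom p args) → OS1 Γ (.atom p args) := by
    intro Γ p args ih σ
    obtain ⟨M', hM'⟩ := ih σ
    exact ⟨M', .head (by simpa [substF] using hM')⟩
  have c4 : ∀ (Γ : List Form) (n : ℕ) (φ : Form), Γ[n]? = some φ → OS2 Γ φ := by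
    intro Γ n φ hn σ
    refine ⟨.pvar n, .var ?_⟩
    rw [List.getElem?_map, hn]; rfl
  have c5 : ∀ (Γ : List Form) (φ ψ : Form), OS2 Γ (.imp φ ψ) → OS1 Γ φ → OS2 Γ ψ := by
    intro Γ φ ψ ihM ihN σ
    obtain ⟨M', hM'⟩ := ihM σ
    obtain ⟨N', hN'⟩ := ihN σ
    exact ⟨.papp M' N', .papp (by simpa [substF] using hM') hN'⟩
  have c6 : ∀ (Γ : List Form) (φ : Form) (x : ℕ), OS2 Γ (.all φ) → OS2 Γ (subst0 x φ) := by
    intro Γ φ x ih σ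
    obtain ⟨M', hM'⟩ := ih σ
    refine ⟨.oapp M' (σ x), ?_⟩
    have := LnfApp.oapp (σ x) (by simpa [substF] using hM' :
      LnfApp (Γ.map (substF σ)) M' (.all (substF (upRen σ) φ)))
    rwa [subst0_substF_up] at this
  constructor
  · intro Γ M ψ h
    exact Lnf.rec (motive_1 := fun Γ _ ψ _ => OS1 Γ ψ) (motive_2 := fun Γ _ ψ _ => OS2 Γ ψ)
      (fun {Γ φ ψ M} _ ih => c1 Γ φ ψ ih) (fun {Γ φ M} _ ih => c2 Γ φ ih)
      (fun {Γ M p args} _ ih => c3 Γ p args ih) (fun {Γ n φ} hn => c4 Γ n φ hn)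
      (fun {Γ M N φ ψ} _ _ ihM ihN => c5 Γ φ ψ ihM ihN)
      (fun {Γ M φ} x _ ih => c6 Γ φ x ih) h
  · intro Γ M ψ h
    exact LnfApp.rec (motive_1 := fun Γ _ ψ _ => OS1 Γ ψ) (motive_2 := fun Γ _ ψ _ => OS2 Γ ψ)
      (fun {Γ φ ψ M} _ ih => c1 Γ φ ψ ih) (fun {Γ φ M} _ ih => c2 Γ φ ih)
      (fun {Γ M p args} _ ih => c3 Γ p args ih) (fun {Γ n φ} hn => c4 Γ n φ hn)
      (fun {Γ M N φ ψ} _ _ ihM ihN => c5 Γ φ ψ ihM ihN)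
      (fun {Γ M φ} x _ ih => c6 Γ φ x ih) h

theorem osubst_lnf {Γ M ψ} (h : Lnf Γ M ψ) : OS1 Γ ψ := osubst_both.1 Γ M ψ h
theorem osubst_lnfapp {Γ M ψ} (h : LnfApp Γ M ψ) : OS2 Γ ψ := osubst_both.2 Γ M ψ h

/-- map subst0-x ∘ shiftF = id on contexts. -/
theorem map_subst0_shift (x : ℕ) (Γ : List Form) :
    (Γ.map shiftF).map (substF (fun n => match n with | 0 => x | n + 1 => n)) = Γ := by
  rw [List.map_map]
  have : ∀ f ∈ Γ, (substF (fun n => match n with | 0 => x | n+1 => n) ∘ shiftF) f = id f := by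
    intro f _; exact subst0_shiftF x f
  rw [List.map_congr_left this, List.map_id]

/-- Instantiation: from `Lnf (Γ.map shiftF) M φ` get an lnf of `subst0 x φ` in `Γ`. -/
theorem inst_lnf {Γ M φ} (h : Lnf (Γ.map shiftF) M φ) (x : ℕ) :
    ∃ N, Lnf Γ N (subst0 x φ) := by
  obtain ⟨N, hN⟩ := osubst_lnf h (fun n => match n with | 0 => x | n + 1 => n)
  rw [map_subst0_shift] at hN
  exact ⟨N, hN⟩

end MFOL
namespace MFOL

theorem eta : ∀ (φ : Form) {Γ : List Form} {M : Pt}, LnfApp Γ M φ → ∃ N, Lnf Γ N φ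
  | .atom p args, Γ, M, h => ⟨M, .head h⟩
  | .imp α β, Γ, M, h => by
    obtain ⟨M', hM'⟩ := pren_lnfapp h (α :: Γ) Nat.succ (by intro k τ hk; simpa using hk)
    obtain ⟨A, hA⟩ := eta α (.var (Γ := α :: Γ) (n := 0) rfl)
    obtain ⟨N, hN⟩ := eta β (.papp hM' hA)
    exact ⟨.plam α N, .plam hN⟩
  | .all φ, Γ, M, h => by
    obtain ⟨M', hM'⟩ := osubst_lnfapp h Nat.succ
    have hM'' : LnfApp (Γ.map shiftF) M' (.all (substF (upRen Nat.succ) φ)) := by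
      simpa [substF, shiftF] using hM'
    have h0 := LnfApp.oapp 0 hM''
    rw [subst0_up_zero] at h0
    obtain ⟨N, hN⟩ := eta φ h0
    exact ⟨.olam N, .olam hN⟩

end MFOL
namespace MFOL

def Cut1 (n : ℕ) (Γ₀ : List Form) (ψ : Form) : Prop :=
  ∀ (φ : Form) (Δ Γ : List Form), sizeF φ ≤ n → Γ₀ = Δ ++ φ :: Γ →
    (∃ P, Lnf (Δ ++ Γ) P φ) → ∃ N, Lnf (Δ ++ Γ) N ψ

def Cut2 (n : ℕ) (Γ₀ : List Form) (ψ : Form) : Prop :=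
  ∀ (φ : Form) (Δ Γ : List Form), sizeF φ ≤ n → Γ₀ = Δ ++ φ :: Γ →
    (∃ P, Lnf (Δ ++ Γ) P φ) →
    (∃ N, LnfApp (Δ ++ Γ) N ψ) ∨ ((∃ N, Lnf (Δ ++ Γ) N ψ) ∧ sizeF ψ ≤ sizeF φ)

theorem cut : ∀ (n : ℕ) (Γ₀ : List Form) (M : Pt) (ψ : Form),
    Lnf Γ₀ M ψ → Cut1 n Γ₀ ψ := by
  intro n
  induction n using Nat.strong_induction_on with
  | _ n oIH =>
  have c1 : ∀ (Γ₀ : List Form) (α ψ' : Form), Cut1 n (α :: Γ₀) ψ' →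
      Cut1 n Γ₀ (.imp α ψ') := by
    intro Γ₀ α ψ' ih φ Δ Γ hsz hctx hφ
    obtain ⟨P, hP⟩ := hφ
    obtain ⟨P', hP'⟩ := weaken_cons hP α
    obtain ⟨N, hN⟩ := ih φ (α :: Δ) Γ hsz (by simp [hctx]) ⟨P', hP'⟩
    exact ⟨.plam α N, .plam hN⟩
  have c2 : ∀ (Γ₀ : List Form) (ψ' : Form), Cut1 n (Γ₀.map shiftF) ψ' →
      Cut1 n Γ₀ (.all ψ') := by
    intro Γ₀ ψ' ih φ Δ Γ hsz hctx hφ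
    obtain ⟨P, hP⟩ := hφ
    obtain ⟨P', hP'⟩ := osubst_lnf hP Nat.succ
    have hctx' : Γ₀.map shiftF = (Δ.map shiftF) ++ shiftF φ :: (Γ.map shiftF) := by
      simp [hctx]
    have hsz' : sizeF (shiftF φ) ≤ n := by
      rw [shiftF, sizeF_substF]; exact hsz
    have hP'' : Lnf (Δ.map shiftF ++ Γ.map shiftF) P' (shiftF φ) := by
      have : (Δ ++ Γ).map (substF Nat.succ) = Δ.map shiftF ++ Γ.map shiftF := by
        simp [shiftF]
      rw [this] at hP'; exact hP'
    obtain ⟨N, hN⟩ := ih (shiftF φ) (Δ.map shiftF) (Γ.map shiftF) hsz' hctx' ⟨P', hP''⟩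
    refine ⟨.olam N, .olam ?_⟩
    rw [List.map_append]; exact hN
  have c3 : ∀ (Γ₀ : List Form) (p : ℕ) (args : List ℕ),
      Cut2 n Γ₀ (.atom p args) → Cut1 n Γ₀ (.atom p args) := by
    intro Γ₀ p args ih φ Δ Γ hsz hctx hφ
    rcases ih φ Δ Γ hsz hctx hφ with ⟨N, hN⟩ | ⟨⟨N, hN⟩, _⟩
    · exact ⟨N, .head hN⟩
    · exact ⟨N, hN⟩
  have c4 : ∀ (Γ₀ : List Form) (k : ℕ) (ψ' : Form), Γ₀[k]? = some ψ' →
      Cut2 n Γ₀ ψ' := by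
    intro Γ₀ k ψ' hk φ Δ Γ hsz hctx hφ
    subst hctx
    rcases lt_trichotomy k Δ.length with hlt | heq | hgt
    · left
      refine ⟨.pvar k, .var ?_⟩
      rw [List.getElem?_append_left hlt] at hk ⊢
      exact hk
    · right
      have : ψ' = φ := by
        rw [List.getElem?_append_right (le_of_eq heq.symm), heq, Nat.sub_self] at hk
        simpa using hk.symm
      subst this
      exact ⟨hφ, le_refl _⟩
    · left
      refine ⟨.pvar (k - 1), .var ?_⟩
      rw [List.getElem?_append_right (by omega)] at hk
      rw [List.getElem?_append_right (by omega : Δ.length ≤ k - 1)]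
      have h1 : k - Δ.length = (k - 1 - Δ.length) + 1 := by omega
      rw [h1] at hk
      simpa using hk
  have c5 : ∀ (Γ₀ : List Form) (α β : Form), Cut2 n Γ₀ (.imp α β) → Cut1 n Γ₀ α →
      Cut2 n Γ₀ β := by
    intro Γ₀ α β ihM ihN φ Δ Γ hsz hctx hφ
    obtain ⟨N', hN'⟩ := ihN φ Δ Γ hsz hctx hφ
    rcases ihM φ Δ Γ hsz hctx hφ with ⟨S, hS⟩ | ⟨⟨V, hV⟩, hszi⟩
    · exact Or.inl ⟨.papp S N', .papp hS hN'⟩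
    · right
      cases hV with
      | plam hB =>
        have hszα : sizeF α < n := by
          have := hsz; simp [sizeF] at hszi; omega
        obtain ⟨N, hN⟩ := oIH (sizeF α) hszα _ _ _ hB α [] (Δ ++ Γ)
          (le_refl _) rfl ⟨N', hN'⟩
        refine ⟨⟨N, hN⟩, ?_⟩
        simp [sizeF] at hszi; omega
  have c6 : ∀ (Γ₀ : List Form) (ψ' : Form) (x : ℕ), Cut2 n Γ₀ (.all ψ') →
      Cut2 n Γ₀ (subst0 x ψ') := by
    intro Γ₀ ψ' x ihM φ Δ Γ hsz hctx hφ
    rcases ihM φ Δ Γ hsz hctx hφ with ⟨S, hS⟩ | ⟨⟨V, hV⟩, hszi⟩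
    · exact Or.inl ⟨.oapp S x, .oapp x hS⟩
    · right
      cases hV with
      | olam hB =>
        obtain ⟨N, hN⟩ := inst_lnf hB x
        refine ⟨⟨N, hN⟩, ?_⟩
        rw [sizeF_subst0]
        simp [sizeF] at hszi; omega
  intro Γ₀ M ψ h
  exact Lnf.rec (motive_1 := fun Γ₀ _ ψ _ => Cut1 n Γ₀ ψ)
    (motive_2 := fun Γ₀ _ ψ _ => Cut2 n Γ₀ ψ)
    (fun {Γ₀ α ψ' M} _ ih => c1 Γ₀ α ψ' ih) (fun {Γ₀ ψ' M} _ ih => c2 Γ₀ ψ' ih)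
    (fun {Γ₀ M p args} _ ih => c3 Γ₀ p args ih) (fun {Γ₀ k ψ'} hk => c4 Γ₀ k ψ' hk)
    (fun {Γ₀ M N α β} _ _ ihM ihN => c5 Γ₀ α β ihM ihN)
    (fun {Γ₀ M ψ'} x _ ih => c6 Γ₀ ψ' x ih) h

/-- Cut at the front of the context. -/
theorem cut0 {Γ : List Form} {φ ψ : Form} {M : Pt}
    (h : Lnf (φ :: Γ) M ψ) (hφ : ∃ P, Lnf Γ P φ) : ∃ N, Lnf Γ N ψ :=
  cut (sizeF φ) (φ :: Γ) M ψ h φ [] Γ (le_refl _) rfl hφ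

end MFOL
namespace MFOL

theorem prv_lnf {S : Set Form} {φ : Form} (h : Prv S φ) :
    ∀ Γ : List Form, (∀ ψ ∈ S, ψ ∈ Γ) → ∃ N : Pt, Lnf Γ N φ := by
  induction h with
  | @ax _ φ hmem =>
    intro Γ hΓ
    obtain ⟨k, hk⟩ := List.mem_iff_getElem?.mp (hΓ φ hmem)
    exact eta φ (.var hk)
  | @impI _ φ ψ _ ih =>
    intro Γ hΓ
    obtain ⟨N, hN⟩ := ih (φ :: Γ) (by
      intro χ hχ
      rcases hχ with hχ | hχ
      · subst hχ; exact List.mem_cons_self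
      · exact List.mem_cons_of_mem _ (hΓ χ hχ))
    exact ⟨.plam φ N, .plam hN⟩
  | @impE _ φ ψ _ _ ih1 ih2 =>
    intro Γ hΓ
    obtain ⟨M, hM⟩ := ih1 Γ hΓ
    obtain ⟨N, hN⟩ := ih2 Γ hΓ
    cases hM with
    | plam hB => exact cut0 hB ⟨N, hN⟩
  | @allI _ φ _ ih =>
    intro Γ hΓ
    obtain ⟨N, hN⟩ := ih (Γ.map shiftF) (by
      rintro χ ⟨χ', hχ', rfl⟩
      exact List.mem_map_of_mem (hΓ χ' hχ'))
    exact ⟨.olam N, .olam hN⟩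
  | @allE _ φ x _ ih =>
    intro Γ hΓ
    obtain ⟨M, hM⟩ := ih Γ hΓ
    cases hM with
    | olam hB => exact inst_lnf hB x

end MFOL

/-- If φ is derivable from Γ in minimal first-order logic then some proof term
in long normal form has type φ in Γ. -/
theorem stmt4 (Γ : List MFOL.Form) (φ : MFOL.Form)
    (h : MFOL.Prv {ψ | ψ ∈ Γ} φ) : ∃ N : MFOL.Pt, MFOL.Lnf Γ N φ :=
  MFOL.prv_lnf h Γ (fun _ hψ => hψ)
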